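/- arXiv:1909.01751 — 2 statements merged into one kernel-verified Lean document; each statement's English description precedes it below -/
import Mathlib

section
/- Let X be a finitely supported subset of an invariant set with no infinite uniformly supported subset, and let f : ℘_fin(X) → ℘_fin(X) be a finitely supported order-preserving function (with respect to set inclusion). Then f has a least fixed point supported by supp(f) ∪ supp(X). -/
open Pointwise

/-- The group of finitary permutations of the set `A` of atoms:
bijections of `A` that move only finitely many atoms. -/
def finPerm (A : Type*) : Subgroup (Equiv.Perm A) where
  carrier := {π | {a | π a ≠ a}.Finite}
  one_mem' := by simp
  mul_mem' := by
    intro π σ hπ hσ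
    apply Set.Finite.subset (hπ.union hσ)
    intro a ha
    by_contra hc
    simp only [Set.mem_union, Set.mem_setOf_eq, not_or, not_not] at hc
    exact ha (by simp [Equiv.Perm.mul_apply, hc.1, hc.2])
  inv_mem' := by
    intro π hπ
    apply Set.Finite.subset hπ
    intro a ha
    simp only [Set.mem_setOf_eq] at ha ⊢
    intro h
    exact ha (Equiv.Perm.inv_eq_iff_eq.mpr h.symm)

/-- `x` is finitely supported: some finite set of atoms supports it. -/
def FinitelySupported (A : Type*) {X : Type*} [MulAction (finPerm A) X] (x : X) : Prop :=
  ∃ S : Set A, S.Finite ∧ MulAction.Supports (finPerm A) S x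

/-- A subset `Z` of an `S_A`-set is uniformly supported if a single finite set
of atoms supports every element of `Z`. -/
def UniformlySupported (A : Type*) {X : Type*} [MulAction (finPerm A) X] (Z : Set X) : Prop :=
  ∃ S : Set A, S.Finite ∧ ∀ x ∈ Z, MulAction.Supports (finPerm A) S x

/-- The least support of `x`: the intersection of all finite sets of atoms supporting `x`. -/
noncomputable def supp (A : Type*) {X : Type*} [MulAction (finPerm A) X] (x : X) : Set A :=
  ⋂₀ {S : Set A | S.Finite ∧ MulAction.Supports (finPerm A) S x}

/-- `Z` contains no infinite uniformly supported subset
(`Z` is "FSM non-uniformly infinite"). -/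
def NoInfUS (A : Type*) {X : Type*} [MulAction (finPerm A) X] (Z : Set X) : Prop :=
  ∀ W ⊆ Z, UniformlySupported A W → W.Finite

/-- The uniform powerset `℘_us(X)`: all uniformly supported subsets of `X`. -/
def usPowerset (A : Type*) {X : Type*} [MulAction (finPerm A) X] (Z : Set X) : Set (Set X) :=
  {W | W ⊆ Z ∧ UniformlySupported A W}

/-- The finite powerset `℘_fin(X)`: all finite subsets of `X`. -/
def finPowerset {X : Type*} (Z : Set X) : Set (Set X) :=
  {W | W ⊆ Z ∧ W.Finite}

/-- `S` supports the function `f` on the domain `X` (Proposition 2.18'(2)):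
for every `π` fixing `S` pointwise and every `x ∈ X`, `π • x ∈ X` and
`f (π • x) = π • f x`. -/
def FnSupportsOn (A : Type*) {Y : Type*} [MulAction (finPerm A) Y]
    (X : Set Y) (S : Set A) (f : Y → Y) : Prop :=
  ∀ π : finPerm A, (∀ a ∈ S, π • a = a) → ∀ x ∈ X, π • x ∈ X ∧ f (π • x) = π • f x

/-- The least support of a function `f` with domain `X`. -/
noncomputable def fnSupp (A : Type*) {Y : Type*} [MulAction (finPerm A) Y]
    (X : Set Y) (f : Y → Y) : Set A :=
  ⋂₀ {S : Set A | S.Finite ∧ FnSupportsOn A X S f}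


theorem swap_mem (A : Type*) [DecidableEq A] (a b : A) : Equiv.swap a b ∈ finPerm A := by
  show {x | Equiv.swap a b x ≠ x}.Finite
  apply Set.Finite.subset (Set.Finite.insert a (Set.finite_singleton b))
  intro x hx
  by_contra hc
  simp only [Set.mem_insert_iff, Set.mem_singleton_iff, not_or] at hc
  exact hx (Equiv.swap_apply_of_ne_of_ne hc.1 hc.2)

def swapFP {A : Type*} [DecidableEq A] (a b : A) : finPerm A :=
  ⟨Equiv.swap a b, swap_mem A a b⟩

section
variable {A : Type*} [DecidableEq A]

theorem swapFP_smul (a b x : A) : swapFP a b • x = Equiv.swap a b x := rfl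

theorem swapFP_mul_self (a b : A) : swapFP a b * swapFP a b = 1 := by
  apply Subtype.ext
  show Equiv.swap a b * Equiv.swap a b = 1
  simp [Equiv.swap_mul_self]

theorem swapFP_decomp (a b c : A) (hab : a ≠ b) (hac : a ≠ c) (hbc : b ≠ c) :
    swapFP a b = swapFP a c * swapFP a b * swapFP b c := by
  apply Subtype.ext
  show Equiv.swap a b = Equiv.swap a c * Equiv.swap a b * Equiv.swap b c
  ext x
  simp only [Equiv.Perm.mul_apply]
  rcases eq_or_ne x a with rfl | hxa
  · rw [Equiv.swap_apply_left, Equiv.swap_apply_of_ne_of_ne hab hac,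
      Equiv.swap_apply_left, Equiv.swap_apply_of_ne_of_ne hab.symm hbc]
  rcases eq_or_ne x b with rfl | hxb
  · rw [Equiv.swap_apply_right, Equiv.swap_apply_left,
      Equiv.swap_apply_of_ne_of_ne hac.symm hbc.symm, Equiv.swap_apply_right]
  rcases eq_or_ne x c with rfl | hxc
  · rw [Equiv.swap_apply_of_ne_of_ne hxa hxb, Equiv.swap_apply_right,
      Equiv.swap_apply_right, Equiv.swap_apply_left]
  · rw [Equiv.swap_apply_of_ne_of_ne hxa hxb, Equiv.swap_apply_of_ne_of_ne hxb hxc,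
      Equiv.swap_apply_of_ne_of_ne hxa hxb, Equiv.swap_apply_of_ne_of_ne hxa hxc]
end

theorem swapFP_decomp2 {A : Type*} [DecidableEq A] (a b c : A)
    (hab : a ≠ b) (hac : a ≠ c) (hbc : b ≠ c) :
    swapFP a b = swapFP a c * swapFP b c * swapFP a c := by
  apply Subtype.ext
  show Equiv.swap a b = Equiv.swap a c * Equiv.swap b c * Equiv.swap a c
  ext x
  simp only [Equiv.Perm.mul_apply]
  rcases eq_or_ne x a with rfl | hxa
  · rw [Equiv.swap_apply_left, Equiv.swap_apply_left, Equiv.swap_apply_right,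
      Equiv.swap_apply_of_ne_of_ne hab.symm hbc]
  rcases eq_or_ne x b with rfl | hxb
  · rw [Equiv.swap_apply_right, Equiv.swap_apply_of_ne_of_ne hab.symm hbc,
      Equiv.swap_apply_left, Equiv.swap_apply_right]
  rcases eq_or_ne x c with rfl | hxc
  · rw [Equiv.swap_apply_of_ne_of_ne hac.symm hbc.symm, Equiv.swap_apply_right,
      Equiv.swap_apply_of_ne_of_ne hab hac, Equiv.swap_apply_left]
  · rw [Equiv.swap_apply_of_ne_of_ne hxa hxb, Equiv.swap_apply_of_ne_of_ne hxa hxc,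
      Equiv.swap_apply_of_ne_of_ne hxb hxc, Equiv.swap_apply_of_ne_of_ne hxa hxc]

theorem swapFP_comm {A : Type*} [DecidableEq A] (a b : A) : swapFP a b = swapFP b a := by
  apply Subtype.ext; exact Equiv.swap_comm a b

theorem fix_P {A : Type*} [DecidableEq A] [Infinite A] (P : finPerm A → Prop)
    (Pmul : ∀ π σ : finPerm A, P π → P σ → P (π * σ))
    {S₁ S₂ : Set A} (h₁ : S₁.Finite) (h₂ : S₂.Finite)
    (hS₁ : ∀ π : finPerm A, (∀ a ∈ S₁, π • a = a) → P π)
    (hS₂ : ∀ π : finPerm A, (∀ a ∈ S₂, π • a = a) → P π) :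
    ∀ π : finPerm A, (∀ a ∈ S₁ ∩ S₂, π • a = a) → P π := by
  have Pone : P 1 := hS₁ 1 (fun a _ => one_smul _ a)
  -- mixed swap case
  have Pmixed : ∀ a b : A, a ∈ S₁ → a ∉ S₂ → b ∈ S₂ → b ∉ S₁ → P (swapFP a b) := by
    intro a b ha1 ha2 hb2 hb1
    obtain ⟨c, hc⟩ := ((h₁.union h₂).union (Set.finite_singleton a |>.insert b)).infinite_compl.nonempty
    simp only [Set.mem_compl_iff, Set.mem_union, Set.mem_insert_iff,
      Set.mem_singleton_iff, not_or] at hc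
    obtain ⟨⟨hc1, hc2⟩, hcb, hca⟩ := hc
    have hab : a ≠ b := fun h => hb1 (h ▸ ha1)
    rw [swapFP_decomp2 a b c hab (fun h => hca h.symm) (fun h => hcb h.symm)]
    apply Pmul
    apply Pmul
    · exact hS₂ _ (fun d hd => Equiv.swap_apply_of_ne_of_ne
        (fun h => ha2 (h ▸ hd)) (fun h => hc2 (h ▸ hd)))
    · exact hS₁ _ (fun d hd => Equiv.swap_apply_of_ne_of_ne
        (fun h => hb1 (h ▸ hd)) (fun h => hc1 (h ▸ hd)))
    · exact hS₂ _ (fun d hd => Equiv.swap_apply_of_ne_of_ne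
        (fun h => ha2 (h ▸ hd)) (fun h => hc2 (h ▸ hd)))
  have Pswap : ∀ a b : A, a ∉ S₁ ∩ S₂ → b ∉ S₁ ∩ S₂ → P (swapFP a b) := by
    intro a b ha hb
    by_cases h1 : a ∉ S₁ ∧ b ∉ S₁
    · exact hS₁ _ (fun d hd => Equiv.swap_apply_of_ne_of_ne
        (fun h => h1.1 (h ▸ hd)) (fun h => h1.2 (h ▸ hd)))
    by_cases h2 : a ∉ S₂ ∧ b ∉ S₂
    · exact hS₂ _ (fun d hd => Equiv.swap_apply_of_ne_of_ne
        (fun h => h2.1 (h ▸ hd)) (fun h => h2.2 (h ▸ hd)))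
    push_neg at h1 h2
    by_cases ha1 : a ∈ S₁
    · have ha2 : a ∉ S₂ := fun h => ha ⟨ha1, h⟩
      have hb2 : b ∈ S₂ := h2 ha2
      have hb1 : b ∉ S₁ := fun h => hb ⟨h, hb2⟩
      exact Pmixed a b ha1 ha2 hb2 hb1
    · have hb1 : b ∈ S₁ := h1 ha1
      have hb2 : b ∉ S₂ := fun h => hb ⟨hb1, h⟩
      have ha2 : a ∈ S₂ := by
        by_contra hn
        exact hb2 (h2 hn)
      rw [swapFP_comm]
      exact Pmixed b a hb1 hb2 ha2 ha1
  suffices H : ∀ n : ℕ, ∀ π : finPerm A, {x | (π : Equiv.Perm A) x ≠ x}.ncard = n →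
      (∀ a ∈ S₁ ∩ S₂, π • a = a) → P π by
    intro π hπ; exact H _ π rfl hπ
  intro n
  induction n using Nat.strong_induction_on with
  | _ n IH =>
    intro π hcard hπ
    have hMfin : {x | (π : Equiv.Perm A) x ≠ x}.Finite := π.2
    rcases Set.eq_empty_or_nonempty {x | (π : Equiv.Perm A) x ≠ x} with hM | hM
    · have hπ1 : π = 1 := by
        apply Subtype.ext; ext x
        by_contra hx
        exact (Set.eq_empty_iff_forall_notMem.mp hM x) hx
      rw [hπ1]; exact Pone
    · obtain ⟨a, ha⟩ := hM
      have ha' : (π : Equiv.Perm A) a ≠ a := ha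
      set b := (π : Equiv.Perm A) a with hbdef
      have hba : b ≠ a := ha'
      have hbM : (π : Equiv.Perm A) b ≠ b := by
        intro h
        exact hba ((π : Equiv.Perm A).injective (h.trans hbdef))
      set σ := swapFP a b * π with hσdef
      have hσx : ∀ x, (σ : Equiv.Perm A) x = Equiv.swap a b ((π : Equiv.Perm A) x) :=
        fun x => rfl
      have hσsub : {x | (σ : Equiv.Perm A) x ≠ x} ⊆ {x | (π : Equiv.Perm A) x ≠ x} \ {a} := by
        intro x hx
        simp only [Set.mem_setOf_eq] at hx
        constructor
        · show (π : Equiv.Perm A) x ≠ x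
          intro hfix
          apply hx
          rw [hσx, hfix]
          apply Equiv.swap_apply_of_ne_of_ne
          · intro h; rw [h] at hfix; exact ha' hfix
          · intro h; rw [h] at hfix; exact hbM hfix
        · show x ≠ a
          intro h
          apply hx
          rw [hσx, h, ← hbdef, Equiv.swap_apply_right]
      have hlt : {x | (σ : Equiv.Perm A) x ≠ x}.ncard < n := by
        calc {x | (σ : Equiv.Perm A) x ≠ x}.ncard
            ≤ ({x | (π : Equiv.Perm A) x ≠ x} \ {a}).ncard :=
              Set.ncard_le_ncard hσsub hMfin.diff
          _ < {x | (π : Equiv.Perm A) x ≠ x}.ncard :=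
              Set.ncard_diff_singleton_lt_of_mem ha hMfin
          _ = n := hcard
      have haS : a ∉ S₁ ∩ S₂ := fun h => ha' (hπ a h)
      have hbS : b ∉ S₁ ∩ S₂ := fun h => hbM (hπ b h)
      have hσfix : ∀ c ∈ S₁ ∩ S₂, σ • c = c := by
        intro c hc
        show Equiv.swap a b ((π : Equiv.Perm A) c) = c
        have hcc : (π : Equiv.Perm A) c = c := hπ c hc
        rw [hcc]
        apply Equiv.swap_apply_of_ne_of_ne
        · intro h; rw [h] at hcc hc; exact ha' hcc
        · intro h; rw [h] at hcc hc; exact hbM hcc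
      have Pσ : P σ := IH _ hlt σ rfl hσfix
      have hπeq : π = swapFP a b * σ := by
        rw [hσdef, ← mul_assoc, swapFP_mul_self, one_mul]
      rw [hπeq]
      exact Pmul _ _ (Pswap a b haS hbS) Pσ

/-- Intersection of two finite supports of an element is a support. -/
theorem supports_inter {A : Type*} [DecidableEq A] [Infinite A] {X : Type*}
    [MulAction (finPerm A) X] (x : X) {S₁ S₂ : Set A} (h₁ : S₁.Finite) (h₂ : S₂.Finite)
    (hs₁ : MulAction.Supports (finPerm A) S₁ x) (hs₂ : MulAction.Supports (finPerm A) S₂ x) :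
    MulAction.Supports (finPerm A) (S₁ ∩ S₂) x := by
  intro π hπ
  exact fix_P (fun π => π • x = x)
    (fun π σ hπ' hσ' => by show (π * σ) • x = x; rw [mul_smul]; rw [show σ • x = x from hσ']; exact hπ') h₁ h₂ hs₁ hs₂ π hπ

/-- Generic: the sInter of a nonempty (finite-witnessed) intersection-closed
family of finite supports is itself in the family. -/
theorem sInter_support {A : Type*} (Q : Set A → Prop)
    (hex : ∃ S : Set A, S.Finite ∧ Q S)
    (hint : ∀ S₁ S₂ : Set A, S₁.Finite → S₂.Finite → Q S₁ → Q S₂ → Q (S₁ ∩ S₂)) :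
    (⋂₀ {S : Set A | S.Finite ∧ Q S}).Finite ∧ Q (⋂₀ {S : Set A | S.Finite ∧ Q S}) := by
  obtain ⟨S₀, hS₀f, hS₀⟩ := hex
  set 𝒢 := {S : Set A | S ⊆ S₀ ∧ S.Finite ∧ Q S} with h𝒢
  have h𝒢ne : {n | ∃ S ∈ 𝒢, S.ncard = n}.Nonempty := ⟨S₀.ncard, S₀, ⟨le_refl _, hS₀f, hS₀⟩, rfl⟩
  obtain ⟨M, hM𝒢, hMcard⟩ := Nat.sInf_mem h𝒢ne
  obtain ⟨hMsub, hMfin, hMQ⟩ := hM𝒢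
  have hMmin : ∀ S : Set A, S.Finite → Q S → M ⊆ S := by
    intro S hSf hSQ
    have hMS : (M ∩ S) ∈ 𝒢 := ⟨(Set.inter_subset_left).trans hMsub, hMfin.inter_of_left _,
      hint _ _ hMfin hSf hMQ hSQ⟩
    have hle : sInf {n | ∃ S ∈ 𝒢, S.ncard = n} ≤ (M ∩ S).ncard :=
      Nat.sInf_le ⟨M ∩ S, hMS, rfl⟩
    rw [← hMcard] at hle
    have heq : M ∩ S = M :=
      Set.eq_of_subset_of_ncard_le Set.inter_subset_left hle hMfin
    intro a haM
    rw [← heq] at haM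
    exact haM.2
  have hIeq : ⋂₀ {S : Set A | S.Finite ∧ Q S} = M := by
    apply Set.Subset.antisymm
    · exact Set.sInter_subset_of_mem ⟨hMfin, hMQ⟩
    · intro a haM
      apply Set.mem_sInter.mpr
      intro S hS
      exact hMmin S hS.1 hS.2 haM
  rw [hIeq]
  exact ⟨hMfin, hMQ⟩

/-- supports is monotone in the support set. -/
theorem supports_mono {A : Type*} {X : Type*} [MulAction (finPerm A) X] (x : X)
    {S S' : Set A} (hss : S ⊆ S') (hs : MulAction.Supports (finPerm A) S x) :
    MulAction.Supports (finPerm A) S' x :=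
  fun π hπ => hs π (fun a ha => hπ (hss ha))

/-- The least support of a finitely supported element is a finite support. -/
theorem supp_spec {A : Type*} [DecidableEq A] [Infinite A] {X : Type*}
    [MulAction (finPerm A) X] (x : X) (hx : FinitelySupported A x) :
    (supp A x).Finite ∧ MulAction.Supports (finPerm A) (supp A x) x :=
  sInter_support (fun S => MulAction.Supports (finPerm A) S x) hx
    (fun S₁ S₂ h₁ h₂ => supports_inter x h₁ h₂)

theorem supp_subset {A : Type*} {X : Type*} [MulAction (finPerm A) X] (x : X)
    {S : Set A} (hSf : S.Finite) (hS : MulAction.Supports (finPerm A) S x) :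
    supp A x ⊆ S :=
  Set.sInter_subset_of_mem ⟨hSf, hS⟩

theorem fnSupportsOn_inter {A : Type*} [DecidableEq A] [Infinite A] {Y : Type*}
    [MulAction (finPerm A) Y] (X : Set Y) (f : Y → Y) {S₁ S₂ : Set A}
    (h₁ : S₁.Finite) (h₂ : S₂.Finite)
    (hs₁ : FnSupportsOn A X S₁ f) (hs₂ : FnSupportsOn A X S₂ f) :
    FnSupportsOn A X (S₁ ∩ S₂) f := by
  exact fix_P (fun π => ∀ x ∈ X, π • x ∈ X ∧ f (π • x) = π • f x)
    (fun π σ hπ' hσ' x hx => by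
      obtain ⟨hσ1, hσ2⟩ := hσ' x hx
      obtain ⟨hπ1, hπ2⟩ := hπ' (σ • x) hσ1
      constructor
      · rw [mul_smul]; exact hπ1
      · rw [mul_smul, hπ2, hσ2, mul_smul])
    h₁ h₂ hs₁ hs₂

theorem fnSupp_spec {A : Type*} [DecidableEq A] [Infinite A] {Y : Type*}
    [MulAction (finPerm A) Y] (X : Set Y) (f : Y → Y)
    (hf : ∃ S : Set A, S.Finite ∧ FnSupportsOn A X S f) :
    (fnSupp A X f).Finite ∧ FnSupportsOn A X (fnSupp A X f) f :=
  sInter_support (fun S => FnSupportsOn A X S f) hf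
    (fun S₁ S₂ h₁ h₂ => fnSupportsOn_inter X f h₁ h₂)

/-- A permuted support supports the permuted element. -/
theorem supports_smul {A : Type*} {X : Type*} [MulAction (finPerm A) X] (x : X)
    {S : Set A} (hS : MulAction.Supports (finPerm A) S x) (π : finPerm A) :
    MulAction.Supports (finPerm A) (π • S) (π • x) := by
  intro σ hσ
  have hfix : ∀ a ∈ S, (π⁻¹ * σ * π) • a = a := by
    intro a ha
    have : σ • (π • a) = π • a := hσ (Set.smul_mem_smul_set ha)
    rw [mul_smul, mul_smul, this, inv_smul_smul]
  have := hS _ hfix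
  calc σ • π • x = π • (π⁻¹ * σ * π) • x := by
        rw [mul_smul, mul_smul, smul_inv_smul]
    _ = π • x := by rw [this]

/-- a finitely supported inclusion-order-preserving self-map of `℘_fin(X)`,
for `X` not FSM uniformly infinite, has a least fixed point supported by
`supp(f) ∪ supp(X)`. -/
theorem stmt6 {A Y : Type*} [Infinite A] [MulAction (finPerm A) Y]
    (hinv : ∀ y : Y, FinitelySupported A y) (X : Set Y)
    (hX : FinitelySupported A X) (h : NoInfUS A X)
    (f : Set Y → Set Y)
    (hmap : ∀ Z ∈ finPowerset X, f Z ∈ finPowerset X)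
    (hfs : ∃ S : Set A, S.Finite ∧ FnSupportsOn A (finPowerset X) S f)
    (hmono : ∀ Z ∈ finPowerset X, ∀ W ∈ finPowerset X, Z ⊆ W → f Z ⊆ f W) :
    ∃ L ∈ finPowerset X, f L = L ∧
      (∀ Z ∈ finPowerset X, f Z = Z → L ⊆ Z) ∧
      MulAction.Supports (finPerm A) (fnSupp A (finPowerset X) f ∪ supp A X) L := by
  haveI : DecidableEq A := Classical.decEq A
  obtain ⟨hTf_fin, hTf⟩ := fnSupp_spec (finPowerset X) f hfs
  obtain ⟨hTX_fin, hTX⟩ := supp_spec X hX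
  set T : Set A := fnSupp A (finPowerset X) f ∪ supp A X with hTdef
  have hTfin : T.Finite := hTf_fin.union hTX_fin
  set g : ℕ → Set Y := fun n => f^[n] ∅ with hgdef
  have hg0 : g 0 = ∅ := rfl
  have hgsucc : ∀ n, g (n + 1) = f (g n) := fun n => Function.iterate_succ_apply' f n ∅
  have hgfin : ∀ n, g n ∈ finPowerset X := by
    intro n; induction n with
    | zero => rw [hg0]; exact ⟨Set.empty_subset _, Set.finite_empty⟩
    | succ n ih => rw [hgsucc]; exact hmap _ ih
  have hgmono : ∀ n, g n ⊆ g (n + 1) := by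
    intro n; induction n with
    | zero => rw [hg0]; exact Set.empty_subset _
    | succ n ih =>
      rw [hgsucc, hgsucc]
      exact hmono _ (hgfin n) _ (hgfin (n + 1)) (by rw [hgsucc]; rw [hgsucc] at ih; exact ih)
  have hgsupp : ∀ n, MulAction.Supports (finPerm A) T (g n) := by
    intro n; induction n with
    | zero => intro π hπ; rw [hg0]; exact Set.smul_set_empty
    | succ n ih =>
      intro π hπ
      have hfix : ∀ a ∈ fnSupp A (finPowerset X) f, π • a = a := fun a ha => hπ (Or.inl ha)
      have hgn : π • g n = g n := ih π hπ
      have h2 : f (π • g n) = π • f (g n) := (hTf π hfix (g n) (hgfin n)).2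
      rw [hgn] at h2
      rw [hgsucc, ← h2]
  have helem : ∀ n, ∀ y ∈ g n, MulAction.Supports (finPerm A) T y := by
    intro n y hy
    obtain ⟨hsyf, hsy⟩ := supp_spec y (hinv y)
    have hsub : supp A y ⊆ T := by
      by_contra hns
      obtain ⟨a, hay, haT⟩ := Set.not_subset.mp hns
      have hBinf : ((T ∪ supp A y) ∪ {a})ᶜ.Infinite :=
        ((hTfin.union hsyf).union (Set.finite_singleton a)).infinite_compl
      have hmaps : Set.MapsTo (fun b => swapFP a b • y) (((T ∪ supp A y) ∪ {a})ᶜ) (g n) := by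
        intro b hb
        simp only [Set.mem_compl_iff, Set.mem_union, Set.mem_singleton_iff, not_or] at hb
        obtain ⟨⟨hbT, hbs⟩, hba⟩ := hb
        have hfixT : ∀ c ∈ T, swapFP a b • c = c := by
          intro c hc
          show Equiv.swap a b c = c
          apply Equiv.swap_apply_of_ne_of_ne
          · intro hh; rw [hh] at hc; exact haT hc
          · intro hh; rw [hh] at hc; exact hbT hc
        have hgT : swapFP a b • g n = g n := hgsupp n (swapFP a b) hfixT
        show swapFP a b • y ∈ g n
        rw [← hgT]
        exact Set.smul_mem_smul_set hy
      obtain ⟨b, hb, c, hc, hbc, heq⟩ :=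
        Set.Infinite.exists_ne_map_eq_of_mapsTo hBinf hmaps (hgfin n).2
      simp only [Set.mem_compl_iff, Set.mem_union, Set.mem_singleton_iff, not_or] at hb hc
      obtain ⟨⟨hbT, hbs⟩, hba⟩ := hb
      obtain ⟨⟨hcT, hcs⟩, hca⟩ := hc
      have hab : a ≠ b := fun hh => hba hh.symm
      have hac : a ≠ c := fun hh => hca hh.symm
      have h1 : (swapFP a c * swapFP a b) • y = y := by
        have : swapFP a b • y = swapFP a c • y := heq
        rw [mul_smul, this, ← mul_smul, swapFP_mul_self, one_smul]
      have h2 : swapFP b c • y = y := by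
        apply hsy
        intro d hd
        show Equiv.swap b c d = d
        apply Equiv.swap_apply_of_ne_of_ne
        · intro hh; rw [hh] at hd; exact hbs hd
        · intro hh; rw [hh] at hd; exact hcs hd
      have h3 : swapFP a b • y = y := by
        rw [swapFP_decomp a b c hab hac hbc, mul_smul, h2, h1]
      have h4 : MulAction.Supports (finPerm A) (swapFP a b • supp A y) y := by
        have h5 := supports_smul y hsy (swapFP a b)
        rw [h3] at h5; exact h5
      have h6 : supp A y ⊆ supp A y ∩ (swapFP a b • supp A y) :=
        supp_subset y (hsyf.inter_of_left _)
          (supports_inter y hsyf hsyf.smul_set hsy h4)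
      obtain ⟨d, hd, hda⟩ := (h6 hay).2
      have hdb : d = b := by
        have hda' : Equiv.swap a b d = a := hda
        have : Equiv.swap a b d = Equiv.swap a b b := by rw [hda', Equiv.swap_apply_right]
        exact (Equiv.swap a b).injective this
      rw [hdb] at hd
      exact hbs hd
    exact supports_mono y hsub hsy
  have hU : (⋃ m, g m).Finite := by
    apply h (⋃ m, g m) (Set.iUnion_subset fun m => (hgfin m).1)
    refine ⟨T, hTfin, fun y hy => ?_⟩
    obtain ⟨m, hm⟩ := Set.mem_iUnion.mp hy
    exact helem m y hm
  have hstab : ∃ n, g (n + 1) = g n := by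
    by_contra hns
    push_neg at hns
    have hstrict : ∀ n, n ≤ (g n).ncard := by
      intro n; induction n with
      | zero => exact Nat.zero_le _
      | succ n ih =>
        have hlt : (g n).ncard < (g (n + 1)).ncard :=
          Set.ncard_lt_ncard ((hgmono n).ssubset_of_ne fun hh => hns n hh.symm)
            (hgfin (n + 1)).2
        omega
    have hle := Set.ncard_le_ncard (Set.subset_iUnion g ((⋃ m, g m).ncard + 1)) hU
    have := hstrict ((⋃ m, g m).ncard + 1)
    omega
  obtain ⟨n, hn⟩ := hstab
  refine ⟨g n, hgfin n, ?_, ?_, hgsupp n⟩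
  · rw [← hgsucc]; exact hn
  · intro Z hZ hfZ
    have hall : ∀ m, g m ⊆ Z := by
      intro m; induction m with
      | zero => rw [hg0]; exact Set.empty_subset _
      | succ m ih => rw [hgsucc, ← hfZ]; exact hmono _ (hgfin m) _ hZ ih
    exact hall n
end

section
/- Let X be a finitely supported subset of an invariant set with no infinite uniformly supported subset, and let f : ℘_us(X) → ℘_us(X) be a finitely supported function satisfying Z ⊆ f(Z) for all Z ∈ ℘_us(X). Then for every Z ∈ ℘_us(X) there exists m ∈ ℕ such that f^m(Z) is a fixed point of f. -/
open Pointwise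

section Aux

variable {A : Type*}

lemma swap_mem_finPerm [DecidableEq A] (a b : A) : Equiv.swap a b ∈ finPerm A := by
  have hsub : {x | Equiv.swap a b x ≠ x} ⊆ {a, b} := by
    intro x hx
    by_contra hc
    simp only [Set.mem_insert_iff, Set.mem_singleton_iff, not_or] at hc
    exact hx (Equiv.swap_apply_of_ne_of_ne hc.1 hc.2)
  exact Set.Finite.subset (by simp) hsub

lemma my_swap_triple [DecidableEq A] {a b c : A} (hab : a ≠ b) (hac : a ≠ c) (hbc : b ≠ c) :
    Equiv.swap a b = Equiv.swap a c * Equiv.swap b c * Equiv.swap a c := by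
  have := Equiv.swap_mul_swap_mul_swap (x := b) (y := a) (z := c) hab.symm hbc
  -- this : swap a c * swap b a * swap a c = swap c b
  have h2 : Equiv.swap b a = Equiv.swap a c * Equiv.swap c b * Equiv.swap a c := by
    rw [← this]
    group
    simp [Equiv.swap_mul_self, mul_assoc]
  rw [Equiv.swap_comm a b, h2, Equiv.swap_comm c b]

variable {Y : Type*} [MulAction (finPerm A) Y]

lemma finPerm_mem_iff (π : Equiv.Perm A) : π ∈ finPerm A ↔ {a | π a ≠ a}.Finite := Iff.rfl

lemma finPerm_smul_atom (π : finPerm A) (a : A) : π • a = (π : Equiv.Perm A) a := rfl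

/-- Swap-decomposition: if all swaps avoiding `F` fix `x`, then every finitary
permutation fixing `F` pointwise fixes `x`. -/
lemma smul_eq_of_swaps [DecidableEq A] (F : Set A) (x : Y)
    (hswap : ∀ a b : A, a ≠ b → a ∉ F → b ∉ F →
      ∀ h : Equiv.swap a b ∈ finPerm A, (⟨Equiv.swap a b, h⟩ : finPerm A) • x = x) :
    ∀ π : finPerm A, (∀ a ∈ F, (π : Equiv.Perm A) a = a) → π • x = x := by
  classical
  suffices H : ∀ n (π : finPerm A), {a | (π : Equiv.Perm A) a ≠ a}.ncard ≤ n →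
      (∀ a ∈ F, (π : Equiv.Perm A) a = a) → π • x = x by
    intro π hπ
    exact H _ π le_rfl hπ
  intro n
  induction n with
  | zero =>
    intro π hcard _
    have hfin : {a | (π : Equiv.Perm A) a ≠ a}.Finite := π.2
    have : {a | (π : Equiv.Perm A) a ≠ a} = ∅ :=
      (Set.ncard_eq_zero hfin).mp (Nat.le_zero.mp hcard)
    have hπ1 : π = 1 := by
      apply Subtype.ext
      ext a
      by_contra hne
      exact (Set.eq_empty_iff_forall_notMem.mp this a) hne
    rw [hπ1, one_smul]
  | succ n ih =>
    intro π hcard hfix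
    by_cases hemp : {a | (π : Equiv.Perm A) a ≠ a} = ∅
    · have hπ1 : π = 1 := by
        apply Subtype.ext
        ext a
        by_contra hne
        exact (Set.eq_empty_iff_forall_notMem.mp hemp a) hne
      rw [hπ1, one_smul]
    · obtain ⟨a, ha⟩ := Set.nonempty_iff_ne_empty.mpr hemp
      have hfin : {c | (π : Equiv.Perm A) c ≠ c}.Finite := π.2
      set b := (π : Equiv.Perm A) a with hb
      have hab : a ≠ b := fun h => ha h.symm
      have hbmoved : (π : Equiv.Perm A) b ≠ b := by
        intro h
        exact hab ((π : Equiv.Perm A).injective (hb ▸ h)).symm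
      have haF : a ∉ F := fun h => ha (hfix a h)
      have hbF : b ∉ F := fun h => hbmoved (hfix b h)
      set σ : finPerm A := ⟨Equiv.swap a b, swap_mem_finPerm a b⟩ with hσ
      set π' : finPerm A := σ * π with hπ'
      have hπ'a : ∀ c, (π' : Equiv.Perm A) c = Equiv.swap a b ((π : Equiv.Perm A) c) := by
        intro c; rfl
      have hmoved' : {c | (π' : Equiv.Perm A) c ≠ c} ⊆ {c | (π : Equiv.Perm A) c ≠ c} \ {a} := by
        intro c hc
        simp only [Set.mem_setOf_eq, hπ'a] at hc
        constructor
        · intro hcc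
          rw [hcc] at hc
          rcases eq_or_ne c a with rfl | hca
          · exact ha hcc
          · rcases eq_or_ne c b with rfl | hcb
            · exact hbmoved hcc
            · exact hc (Equiv.swap_apply_of_ne_of_ne hca hcb)
        · intro hca
          simp only [Set.mem_singleton_iff] at hca
          subst hca
          rw [← hb, Equiv.swap_apply_right] at hc
          exact hc rfl
      have hcard' : {c | (π' : Equiv.Perm A) c ≠ c}.ncard ≤ n := by
        have h1 : {c | (π' : Equiv.Perm A) c ≠ c}.ncard ≤
            ({c | (π : Equiv.Perm A) c ≠ c} \ {a}).ncard :=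
          Set.ncard_le_ncard hmoved' hfin.diff
        have h2 : ({c | (π : Equiv.Perm A) c ≠ c} \ {a}).ncard <
            {c | (π : Equiv.Perm A) c ≠ c}.ncard := by
          apply Set.ncard_lt_ncard _ hfin
          exact Set.sdiff_singleton_ssubset.mpr ha
        omega
      have hfix' : ∀ c ∈ F, (π' : Equiv.Perm A) c = c := by
        intro c hc
        rw [hπ'a, hfix c hc]
        apply Equiv.swap_apply_of_ne_of_ne
        · intro h; exact haF (h ▸ hc)
        · intro h; exact hbF (h ▸ hc)
      have hIH := ih π' hcard' hfix'
      have : π = σ * π' := by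
        rw [hπ', ← mul_assoc]
        have hσσ : σ * σ = 1 := by
          apply Subtype.ext
          simp [hσ, Equiv.swap_mul_self]
        rw [hσσ, one_mul]
      rw [this, mul_smul, hIH]
      exact hswap a b hab haF hbF _

/-- Key lemma: if `W` is uniformly supported by `U` and set-supported by `V`,
then every element of `W` is supported by `V`. -/
lemma elem_supports [Infinite A] {W : Set Y} {U V : Set A} (hU : U.Finite) (hV : V.Finite)
    (hunif : ∀ y ∈ W, MulAction.Supports (finPerm A) U y)
    (hset : ∀ π : finPerm A, (∀ a ∈ V, (π : Equiv.Perm A) a = a) → ∀ y ∈ W, π • y ∈ W)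
    {x : Y} (hx : x ∈ W) : MulAction.Supports (finPerm A) V x := by
  classical
  -- Step 1
  have step1 : ∀ (u w : A), u ≠ w → u ∉ V → w ∉ U → w ∉ V → ∀ x' ∈ W,
      ∀ h : Equiv.swap u w ∈ finPerm A, (⟨Equiv.swap u w, h⟩ : finPerm A) • x' = x' := by
    intro u w huw huV hwU hwV x' hx' hmem
    by_cases huU : u ∈ U
    · obtain ⟨c, hc⟩ := ((hU.union hV).union ((Set.finite_singleton w).insert u)).infinite_compl.nonempty
      simp only [Set.mem_compl_iff, Set.mem_union, Set.mem_insert_iff,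
        Set.mem_singleton_iff, not_or] at hc
      obtain ⟨⟨hcU, hcV⟩, hcu, hcw⟩ := hc
      set τ : finPerm A := ⟨Equiv.swap u c, swap_mem_finPerm u c⟩ with hτ
      set ρ : finPerm A := ⟨Equiv.swap w c, swap_mem_finPerm w c⟩ with hρ
      have hy : τ • x' ∈ W := by
        apply hset τ _ x' hx'
        intro a haV
        apply Equiv.swap_apply_of_ne_of_ne
        · intro h; exact huV (h ▸ haV)
        · intro h; exact hcV (h ▸ haV)
      have hρy : ρ • (τ • x') = τ • x' := by
        apply hunif _ hy ρ
        intro a haU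
        rw [finPerm_smul_atom]
        apply Equiv.swap_apply_of_ne_of_ne
        · intro h; exact hwU (h ▸ haU)
        · intro h; exact hcU (h ▸ haU)
      have hid : (⟨Equiv.swap u w, hmem⟩ : finPerm A) = τ * ρ * τ := by
        apply Subtype.ext
        show Equiv.swap u w = Equiv.swap u c * Equiv.swap w c * Equiv.swap u c
        exact my_swap_triple huw (fun h => hcu h.symm) (fun h => hcw h.symm)
      rw [hid, mul_smul, mul_smul, hρy]
      rw [← mul_smul]
      have : τ * τ = 1 := by
        apply Subtype.ext
        simp [hτ, Equiv.swap_mul_self]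
      rw [this, one_smul]
    · apply hunif _ hx'
      intro a haU
      rw [finPerm_smul_atom]
      apply Equiv.swap_apply_of_ne_of_ne
      · intro h; exact huU (h ▸ haU)
      · intro h; exact hwU (h ▸ haU)
  -- Step 2: all swaps avoiding V fix x
  have step2 : ∀ a b : A, a ≠ b → a ∉ V → b ∉ V →
      ∀ h : Equiv.swap a b ∈ finPerm A, (⟨Equiv.swap a b, h⟩ : finPerm A) • x = x := by
    intro a b hab haV hbV hmem
    obtain ⟨c, hc⟩ := ((hU.union hV).union ((Set.finite_singleton b).insert a)).infinite_compl.nonempty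
    simp only [Set.mem_compl_iff, Set.mem_union, Set.mem_insert_iff,
      Set.mem_singleton_iff, not_or] at hc
    obtain ⟨⟨hcU, hcV⟩, hca, hcb⟩ := hc
    set τ : finPerm A := ⟨Equiv.swap a c, swap_mem_finPerm a c⟩ with hτ
    set ρ : finPerm A := ⟨Equiv.swap b c, swap_mem_finPerm b c⟩ with hρ
    have h1 : τ • x = x := step1 a c (fun h => hca h.symm) haV hcU hcV x hx _
    have h2 : ρ • x = x := step1 b c (fun h => hcb h.symm) hbV hcU hcV x hx _
    have hid : (⟨Equiv.swap a b, hmem⟩ : finPerm A) = τ * ρ * τ := by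
      apply Subtype.ext
      show Equiv.swap a b = Equiv.swap a c * Equiv.swap b c * Equiv.swap a c
      exact my_swap_triple hab (fun h => hca h.symm) (fun h => hcb h.symm)
    rw [hid, mul_smul, mul_smul, h1, h2, h1]
  intro π hπ
  exact smul_eq_of_swaps V x step2 π hπ

end Aux


/-- if `X` is not FSM uniformly infinite and `f : ℘_us(X) → ℘_us(X)` is
finitely supported with `Z ⊆ f Z` for all `Z`, then every `Z ∈ ℘_us(X)` reaches a
fixed point of `f` after finitely many iterations. -/
theorem stmt7 {A Y : Type*} [Infinite A] [MulAction (finPerm A) Y]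
    (hinv : ∀ y : Y, FinitelySupported A y) (X : Set Y)
    (hX : FinitelySupported A X) (h : NoInfUS A X)
    (f : Set Y → Set Y)
    (hmap : ∀ Z ∈ usPowerset A X, f Z ∈ usPowerset A X)
    (hfs : ∃ S : Set A, S.Finite ∧ FnSupportsOn A (usPowerset A X) S f)
    (hprog : ∀ Z ∈ usPowerset A X, Z ⊆ f Z) :
    ∀ Z ∈ usPowerset A X, ∃ m : ℕ, f (f^[m] Z) = f^[m] Z := by
  
  classical
  obtain ⟨S, hSfin, hS⟩ := hfs
  intro Z hZ
  obtain ⟨hZX, T, hTfin, hT⟩ := hZ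
  set V : Set A := S ∪ T with hVdef
  have hVfin : V.Finite := hSfin.union hTfin
  have key : ∀ m : ℕ, f^[m] Z ∈ usPowerset A X ∧
      ∀ π : finPerm A, (∀ a ∈ V, π • a = a) → π • f^[m] Z = f^[m] Z := by
    intro m
    induction m with
    | zero =>
      refine ⟨⟨hZX, T, hTfin, hT⟩, ?_⟩
      intro π hπ
      have hfix : ∀ y ∈ Z, π • y = y := fun y hy =>
        hT y hy π (fun a ha => hπ a (Or.inr ha))
      apply Set.Subset.antisymm
      · rintro _ ⟨y, hy, rfl⟩
        simpa [hfix y hy] using hy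
      · intro y hy
        exact ⟨y, hy, hfix y hy⟩
    | succ m ih =>
      rw [Function.iterate_succ_apply']
      refine ⟨hmap _ ih.1, ?_⟩
      intro π hπ
      have h1 := hS π (fun a ha => hπ a (Or.inl ha)) _ ih.1
      rw [← h1.2, ih.2 π hπ]
  set B : Set Y := {x | x ∈ X ∧ MulAction.Supports (finPerm A) V x} with hBdef
  have hBfin : B.Finite := h B (fun x hx => hx.1) ⟨V, hVfin, fun x hx => hx.2⟩
  have hsub : ∀ m : ℕ, f^[m] Z ⊆ B := by
    intro m x hx
    obtain ⟨hmX, U, hUfin, hU⟩ := (key m).1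
    refine ⟨hmX hx, ?_⟩
    apply elem_supports hUfin hVfin hU _ hx
    intro π hπ y hy
    have := (key m).2 π (fun a ha => hπ a ha)
    rw [← this]
    exact Set.smul_mem_smul_set hy
  have hmono : ∀ m : ℕ, f^[m] Z ⊆ f^[m + 1] Z := by
    intro m
    rw [Function.iterate_succ_apply']
    exact hprog _ (key m).1
  by_contra hc
  push_neg at hc
  have hne : ∀ m : ℕ, f^[m] Z ≠ f^[m + 1] Z := by
    intro m hEq
    rw [Function.iterate_succ_apply'] at hEq
    exact hc m hEq.symm
  have hstrict : StrictMono (fun m => (f^[m] Z).ncard) := by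
    apply strictMono_nat_of_lt_succ
    intro m
    exact Set.ncard_lt_ncard ((hmono m).ssubset_of_ne (hne m)) (hBfin.subset (hsub (m + 1)))
  have hle : ∀ m : ℕ, (f^[m] Z).ncard ≤ B.ncard := fun m =>
    Set.ncard_le_ncard (hsub m) hBfin
  have h1 := hstrict.le_apply (x := B.ncard + 1)
  have h2 := hle (B.ncard + 1)
  omega
end
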